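/- The higher reducibility relations hold: Σ_{a_1,...,a_n} Z^{a_1...a_n}_{b_1...b_{n+1}} · Z^{c_1...c_{n-1}}_{a_1...a_n} = 0 in A, where the product is multiplication in A, for all n ≥ 1 and all index values. -/

import Mathlib

variable {k : Type*} [Field k] {A : Type*} [Ring A] [Algebra k A]
variable {ι : Type*} [DecidableEq ι]

/-- The component tensors `Z^{a_1...a_n}_{b_1...b_{n+1}} ∈ A`, defined recursively by
`Z_{b} = t_b` (no upper indices), `Z^a_{bc} = t_b δ^a_c − f^a_{bc}`, and
`Z^{a_1...a_n}_{b_1...b_{n+1}} = Z^{a_1...a_{n-1}}_{b_1...b_n} δ^{a_n}_{b_{n+1}}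
  + (−1)^n δ^{a_1}_{b_1}⋯δ^{a_{n-1}}_{b_{n-1}} f^{a_n}_{b_n b_{n+1}}`. -/
def Zcomp (t : ι → A) (f : ι → ι → ι → k) :
    (n : ℕ) → (Fin n → ι) → (Fin (n + 1) → ι) → A
  | 0, _, b => t (b 0)
  | n + 1, a, b =>
      (if a (Fin.last n) = b (Fin.last (n + 1)) then
          Zcomp t f n (fun i => a i.castSucc) (fun i => b i.castSucc)
        else 0)
      + ((-1 : k) ^ (n + 1) *
          (if ∀ i : Fin n, a i.castSucc = b i.castSucc.castSucc then
            f (b (Fin.last n).castSucc) (b (Fin.last (n + 1))) (a (Fin.last n))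
          else 0)) • (1 : A)

lemma Zcomp_snoc_upper (t : ι → A) (f : ι → ι → ι → k) (m : ℕ)
    (a' : Fin m → ι) (e : ι) (b : Fin (m + 2) → ι) :
    Zcomp t f (m + 1) (Fin.snoc a' e) b =
      (if e = b (Fin.last (m + 1)) then
          Zcomp t f m a' (fun i => b i.castSucc) else 0)
      + ((-1 : k) ^ (m + 1) *
          (if ∀ i : Fin m, a' i = b i.castSucc.castSucc then
            f (b (Fin.last m).castSucc) (b (Fin.last (m + 1))) e
          else 0)) • (1 : A) := by
  simp [Zcomp, Fin.snoc_castSucc, Fin.snoc_last]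

lemma Zcomp_snoc_lower (t : ι → A) (f : ι → ι → ι → k) (m : ℕ)
    (c : Fin (m + 1) → ι) (a' : Fin (m + 1) → ι) (e : ι) :
    Zcomp t f (m + 1) c (Fin.snoc a' e) =
      (if c (Fin.last m) = e then
          Zcomp t f m (fun i => c i.castSucc) a' else 0)
      + ((-1 : k) ^ (m + 1) *
          (if ∀ i : Fin m, c i.castSucc = a' i.castSucc then
            f (a' (Fin.last m)) e (c (Fin.last m))
          else 0)) • (1 : A) := by
  simp [Zcomp, Fin.snoc_castSucc, Fin.snoc_last]

lemma sum_ite_const {α M : Type*} [Fintype α] [AddCommMonoid M] (P : Prop) [Decidable P]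
    (E : α → M) : ∑ x : α, (if P then E x else 0) = if P then ∑ x : α, E x else 0 := by
  split <;> simp

lemma f_assoc [Fintype ι] (B : Module.Basis ι k A) (f : ι → ι → ι → k)
    (hf : ∀ a b : ι, B a * B b = ∑ c : ι, f a b c • B c)
    (p q r s : ι) : ∑ e, f p q e * f e r s = ∑ e, f q r e * f p e s := by
  have h : ∑ d : ι, (∑ e : ι, f p q e * f e r d) • B d
      = ∑ d : ι, (∑ e : ι, f q r e * f p e d) • B d := by
    calc ∑ d : ι, (∑ e : ι, f p q e * f e r d) • B d
        = ∑ e : ι, f p q e • (B e * B r) := by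
          simp only [hf, Finset.smul_sum, Finset.sum_smul, mul_smul]
          rw [Finset.sum_comm]
      _ = (B p * B q) * B r := by rw [hf p q, Finset.sum_mul]; simp [smul_mul_assoc]
      _ = B p * (B q * B r) := by rw [mul_assoc]
      _ = ∑ e : ι, f q r e • (B p * B e) := by rw [hf q r, Finset.mul_sum]; simp [mul_smul_comm]
      _ = ∑ d : ι, (∑ e : ι, f q r e * f p e d) • B d := by
          simp only [hf, Finset.smul_sum, Finset.sum_smul, mul_smul]
          rw [Finset.sum_comm]
  have := congrArg (fun x => B.repr x s) h
  simpa [Module.Basis.repr_sum_self, Finsupp.single_apply] using this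

/-- the higher reducibility relations
`Σ_{a_1,...,a_n} Z^{a_1...a_n}_{b_1...b_{n+1}} · Z^{c_1...c_{n-1}}_{a_1...a_n} = 0` in `A`
(product in `A`), for all `n ≥ 1` and all index values (paper's `n` is `n + 1` below). -/
theorem higher_reducibility_relations
    [Fintype ι] (B : Module.Basis ι k A) (f : ι → ι → ι → k)
    (hf : ∀ a b : ι, B a * B b = ∑ c : ι, f a b c • B c) :
    ∀ (n : ℕ) (b : Fin (n + 2) → ι) (c : Fin n → ι),
      ∑ a : Fin (n + 1) → ι, Zcomp (⇑B) f (n + 1) a b * Zcomp (⇑B) f n c a = 0 := by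
  intro n
  induction n with
  | zero =>
    intro b c
    rw [← (Equiv.funUnique (Fin 1) ι).symm.sum_comp]
    simp only [Zcomp, Equiv.funUnique_symm_apply]
    simp only [Function.const, Fin.last, Fin.isValue, IsEmpty.forall_iff, if_true, pow_one,
      add_mul, smul_mul_assoc, one_mul]
    rw [Finset.sum_add_distrib]
    simp [Finset.sum_ite_eq, neg_smul]
    rw [← hf]
    exact add_neg_cancel _
  | succ n IH =>
    intro b c
    have fa := f_assoc B f hf
    -- split the summation index `a = Fin.snoc a' e`
    rw [← Equiv.sum_comp (Fin.snocEquiv (fun _ : Fin (n+2) => ι))]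
    have hsnoc : ∀ p : ι × (Fin (n+1) → ι),
        (Fin.snocEquiv (fun _ : Fin (n+2) => ι)) p = Fin.snoc p.2 p.1 := fun _ => rfl
    simp only [hsnoc]
    rw [Fintype.sum_prod_type]
    simp only [Zcomp_snoc_upper, Zcomp_snoc_lower]
    simp only [add_mul, mul_add]
    simp only [Finset.sum_add_distrib]
    have h1 : ∑ x : ι, ∑ x_1 : Fin (n + 1) → ι,
        (if x = b (Fin.last (n + 1 + 1)) then
            Zcomp (⇑B) f (n + 1) x_1 fun i => b i.castSucc else 0) *
          (if c (Fin.last n) = x then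
            Zcomp (⇑B) f n (fun i => c i.castSucc) x_1 else 0) = 0 := by
      rw [Finset.sum_comm]
      simp only [ite_mul, zero_mul]
      simp only [Finset.sum_ite_eq', Finset.mem_univ, if_true]
      by_cases hcb : c (Fin.last n) = b (Fin.last (n + 1 + 1))
      · simp only [hcb, if_true]
        exact IH _ _
      · simp [hcb]
    have h2 : ∑ x : ι, ∑ x_1 : Fin (n + 1) → ι,
        ((-1:k) ^ (n + 1 + 1) *
            if ∀ (i : Fin (n + 1)), x_1 i = b i.castSucc.castSucc then
              f (b (Fin.last (n + 1)).castSucc) (b (Fin.last (n + 1 + 1))) x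
            else 0) • (1:A) *
          (if c (Fin.last n) = x then Zcomp (⇑B) f n (fun i => c i.castSucc) x_1 else 0)
        = ((-1:k) ^ (n + 1 + 1) *
            f (b (Fin.last (n + 1)).castSucc) (b (Fin.last (n + 1 + 1))) (c (Fin.last n))) •
            Zcomp (⇑B) f n (fun i => c i.castSucc) (fun i => b i.castSucc.castSucc) := by
      simp only [smul_mul_assoc, one_mul, smul_ite, smul_zero, mul_ite, mul_zero, ite_smul,
        zero_smul]
      simp only [ite_mul, zero_mul, smul_mul_assoc, one_mul]
      rw [Finset.sum_comm]
      simp only [Finset.sum_ite_eq, Finset.mem_univ, if_true]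
      simp only [← funext_iff]
      simp only [Finset.sum_ite_eq', Finset.mem_univ, if_true]
    have h3 : ∑ x : ι, ∑ x_1 : Fin (n + 1) → ι,
        (if x = b (Fin.last (n + 1 + 1)) then
            Zcomp (⇑B) f (n + 1) x_1 fun i => b i.castSucc else 0) *
          ((-1:k) ^ (n + 1) *
            if ∀ (i : Fin n), c i.castSucc = x_1 i.castSucc then
              f (x_1 (Fin.last n)) x (c (Fin.last n)) else 0) • (1:A)
        = ((-1:k) ^ (n + 1) *
            f (b (Fin.last (n + 1)).castSucc) (b (Fin.last (n + 1 + 1))) (c (Fin.last n))) •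
            Zcomp (⇑B) f n (fun i => c i.castSucc) (fun i => b i.castSucc.castSucc)
          + (if ∀ i : Fin n, c i.castSucc = b i.castSucc.castSucc.castSucc then
              ∑ g : ι, f (b (Fin.last n).castSucc.castSucc) (b (Fin.last (n + 1)).castSucc) g *
                f g (b (Fin.last (n + 1 + 1))) (c (Fin.last n))
            else 0) • (1:A) := by
      simp only [ite_mul, zero_mul]
      simp only [sum_ite_const]
      simp only [Finset.sum_ite_eq', Finset.mem_univ, if_true]
      rw [← Equiv.sum_comp (Fin.snocEquiv (fun _ : Fin (n+1) => ι))]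
      have hsnoc' : ∀ p : ι × (Fin n → ι),
          (Fin.snocEquiv (fun _ : Fin (n+1) => ι)) p = Fin.snoc p.2 p.1 := fun _ => rfl
      simp only [hsnoc']
      rw [Fintype.sum_prod_type]
      simp only [Fin.snoc_castSucc, Fin.snoc_last, Zcomp_snoc_upper]
      simp only [mul_smul_comm, mul_one, smul_add]
      simp only [mul_ite, mul_zero, ite_smul, zero_smul, smul_ite, smul_zero, smul_smul]
      simp only [← funext_iff]
      simp only [Finset.sum_add_distrib]
      congr 1
      · simp only [sum_ite_const]
        simp only [Finset.sum_ite_eq, Finset.mem_univ, if_true]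
        simp only [Finset.sum_ite_eq', Finset.mem_univ, if_true]
      · simp only [Finset.sum_ite_eq', Finset.mem_univ, if_true]
        simp only [ite_mul, zero_mul, ite_smul, zero_smul]
        rw [sum_ite_const]
        split_ifs with hQ
        · rw [← Finset.sum_smul]
          congr 1
          refine Finset.sum_congr rfl fun g _ => ?_
          have hr : ((-1:k)^(n+1)) * ((-1:k)^(n+1)) = 1 := by
            rw [← pow_add]; exact Even.neg_one_pow ⟨n+1, by ring⟩
          calc ((-1:k) ^ (n+1) * f g (b (Fin.last (n+1+1))) (c (Fin.last n))) *
                ((-1:k) ^ (n+1) *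
                  f (b (Fin.last n).castSucc.castSucc) (b (Fin.last (n+1)).castSucc) g)
              = (((-1:k)^(n+1)) * ((-1:k)^(n+1))) *
                (f (b (Fin.last n).castSucc.castSucc) (b (Fin.last (n+1)).castSucc) g *
                  f g (b (Fin.last (n+1+1))) (c (Fin.last n))) := by ring
            _ = _ := by rw [hr, one_mul]
        · rfl
    have h4 : ∑ x : ι, ∑ x_1 : Fin (n + 1) → ι,
        ((-1:k) ^ (n + 1 + 1) *
            if ∀ (i : Fin (n + 1)), x_1 i = b i.castSucc.castSucc then
              f (b (Fin.last (n + 1)).castSucc) (b (Fin.last (n + 1 + 1))) x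
            else 0) • (1:A) *
          ((-1:k) ^ (n + 1) *
            if ∀ (i : Fin n), c i.castSucc = x_1 i.castSucc then
              f (x_1 (Fin.last n)) x (c (Fin.last n)) else 0) • (1:A)
        = -((if ∀ i : Fin n, c i.castSucc = b i.castSucc.castSucc.castSucc then
              ∑ g : ι, f (b (Fin.last n).castSucc.castSucc) (b (Fin.last (n + 1)).castSucc) g *
                f g (b (Fin.last (n + 1 + 1))) (c (Fin.last n))
            else 0) • (1:A)) := by
      rw [Finset.sum_comm]
      simp only [smul_mul_assoc, one_mul, smul_smul]
      simp only [mul_ite, mul_zero, ite_mul, zero_mul, ite_smul, zero_smul]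
      simp only [sum_ite_const]
      rw [Finset.sum_eq_single (fun i : Fin (n+1) => b i.castSucc.castSucc)]
      rotate_left
      · intro x _ hx
        have hx' : ¬ ∀ i : Fin (n+1), x i = b i.castSucc.castSucc := by
          simpa [funext_iff] using hx
        simp [hx']
      · intro h; exact absurd (Finset.mem_univ _) h
      rw [if_pos (fun i => rfl)]
      simp only []
      split_ifs with hQ
      · rw [← Finset.sum_smul, ← neg_smul]
        congr 1
        rw [fa (b (Fin.last n).castSucc.castSucc) (b (Fin.last (n + 1)).castSucc)
          (b (Fin.last (n + 1 + 1))) (c (Fin.last n)), ← Finset.sum_neg_distrib]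
        refine Finset.sum_congr rfl fun g _ => ?_
        have hr : ((-1:k)^(n+1+1)) * ((-1:k)^(n+1)) = -1 := by
          rw [← pow_add]; exact Odd.neg_one_pow ⟨n + 1, by ring⟩
        calc ((-1:k) ^ (n+1+1) * f (b (Fin.last (n+1)).castSucc) (b (Fin.last (n+1+1))) g *
                ((-1:k) ^ (n+1) * f (b (Fin.last n).castSucc.castSucc) g (c (Fin.last n))))
            = (((-1:k)^(n+1+1)) * ((-1:k)^(n+1))) *
                (f (b (Fin.last (n+1)).castSucc) (b (Fin.last (n+1+1))) g *
                  f (b (Fin.last n).castSucc.castSucc) g (c (Fin.last n))) := by ring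
          _ = _ := by rw [hr]; ring
      · rw [neg_zero]
    rw [h1, h2, h3, h4]
    have hs : ((-1:k) ^ (n + 1 + 1) *
        f (b (Fin.last (n + 1)).castSucc) (b (Fin.last (n + 1 + 1))) (c (Fin.last n)))
        = -((-1:k) ^ (n + 1) *
        f (b (Fin.last (n + 1)).castSucc) (b (Fin.last (n + 1 + 1))) (c (Fin.last n))) := by
      rw [pow_succ]; ring
    rw [hs, neg_smul]
    abel
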